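/- arXiv:1510.00250 — 2 statements merged into one kernel-verified Lean document; each statement's English description precedes it below -/
import Mathlib

section
/- Let v ∈ ℂ^d and β ∈ 𝔤, and assume there is a letter 𝟘 ∈ A with ν^v_𝟘 = 0 and β_𝟘 ≠ 0. Then there is at most one β̄ ∈ 𝔤 satisfying the two conditions: (i) ξ_v β̄ + [β,β̄] = 0, and (ii) β̄_{ℓ₁⋯ℓ_n} = β_{ℓ₁⋯ℓ_n} for every nonempty word ℓ₁⋯ℓ_n with ν^v_{ℓ₁} = ⋯ = ν^v_{ℓ_n} = 0; i.e., any two elements of 𝔤 satisfying (i) and (ii) coincide. -/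
open scoped BigOperators

/-- Convolution product on `ℂ^W`: `(δ★δ′)_w = Σ_{w=w₁w₂} δ_{w₁} δ′_{w₂}`. -/
noncomputable def conv {A : Type*} (x y : List A → ℂ) : List A → ℂ :=
  fun w => ∑ i ∈ Finset.range (w.length + 1), x (w.take i) * y (w.drop i)

/-- Shuffle product of two words, as a multiset of words. -/
def shuffle {A : Type*} : List A → List A → Multiset (List A)
  | [], w => {w}
  | w, [] => {w}
  | a :: u, b :: v =>
      ((shuffle u (b :: v)).map (a :: ·)) + ((shuffle (a :: u) v).map (b :: ·))

/-- Membership in the group `G`: the shuffle relations with `γ_∅ = 1`. -/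
def isGrp {A : Type*} (γ : List A → ℂ) : Prop :=
  γ [] = 1 ∧ ∀ w w' : List A, γ w * γ w' = ((shuffle w w').map γ).sum

/-- Membership in the Lie algebra `𝔤`. -/
def isLie {A : Type*} (β : List A → ℂ) : Prop :=
  β [] = 0 ∧ ∀ w w' : List A, w ≠ [] → w' ≠ [] → ((shuffle w w').map β).sum = 0

/-- The unit `1` of the convolution product. -/
def unitCW {A : Type*} : List A → ℂ := fun w => match w with | [] => 1 | _ => 0

/-- `ν^v_ℓ = Σ_j v_j ν_{j,ℓ}` for a letter `ℓ`. -/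
noncomputable def nuL {A : Type*} {d : ℕ} (ν : Fin d → A → ℂ) (v : Fin d → ℂ) (ℓ : A) : ℂ :=
  ∑ j, v j * ν j ℓ

/-- `ν^v_w = ν^v_{ℓ₁} + ⋯ + ν^v_{ℓ_n}` for a word `w = ℓ₁⋯ℓ_n`. -/
noncomputable def nuW {A : Type*} {d : ℕ} (ν : Fin d → A → ℂ) (v : Fin d → ℂ) (w : List A) : ℂ :=
  (w.map (nuL ν v)).sum

/-- The operator `Ξ_v`: `(Ξ_v δ)_w = exp(ν^v_w) δ_w`. -/
noncomputable def XiOp {A : Type*} {d : ℕ} (ν : Fin d → A → ℂ) (v : Fin d → ℂ)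
    (δ : List A → ℂ) : List A → ℂ :=
  fun w => Complex.exp (nuW ν v w) * δ w

/-- The operator `ξ_v`: `(ξ_v δ)_w = ν^v_w δ_w`. -/
noncomputable def xiOp {A : Type*} {d : ℕ} (ν : Fin d → A → ℂ) (v : Fin d → ℂ)
    (δ : List A → ℂ) : List A → ℂ :=
  fun w => nuW ν v w * δ w

/-- Assume there is a letter `𝟘` with `ν^v_𝟘 = 0` and `β_𝟘 ≠ 0`. Then
there is at most one `β̄ ∈ 𝔤` with (i) `ξ_v β̄ + [β,β̄] = 0` and (ii) `β̄_w = β_w` for each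
nonempty word `w` all of whose letters `ℓ` satisfy `ν^v_ℓ = 0`. -/
theorem stmt17 {A : Type*} [Countable A] {d : ℕ} (hd : 1 ≤ d) (ν : Fin d → A → ℂ)
    (v : Fin d → ℂ) (β : List A → ℂ) (hβ : isLie β)
    (ℓ₀ : A) (hℓ₀ : nuL ν v ℓ₀ = 0) (hβ₀ : β [ℓ₀] ≠ 0)
    (βbar βbar' : List A → ℂ) (hβbar : isLie βbar) (hβbar' : isLie βbar')
    (hi : xiOp ν v βbar + (conv β βbar - conv βbar β) = 0)
    (hi' : xiOp ν v βbar' + (conv β βbar' - conv βbar' β) = 0)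
    (hii : ∀ w : List A, w ≠ [] → (∀ ℓ ∈ w, nuL ν v ℓ = 0) → βbar w = β w)
    (hii' : ∀ w : List A, w ≠ [] → (∀ ℓ ∈ w, nuL ν v ℓ = 0) → βbar' w = β w) :
    βbar = βbar' := by
  classical
  set D : List A → ℂ := fun w => βbar w - βbar' w with hDdef
  have hD0 : D [] = 0 := by simp [hDdef, hβbar.1, hβbar'.1]
  have hDnull : ∀ w : List A, w ≠ [] → (∀ ℓ ∈ w, nuL ν v ℓ = 0) → D w = 0 := by
    intro w hw h
    simp [hDdef, hii w hw h, hii' w hw h]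
  have hnuApp : ∀ x y : List A, nuW ν v (x ++ y) = nuW ν v x + nuW ν v y := by
    intro x y; simp [nuW]
  have hnuCons : ∀ (a : A) (x : List A), nuW ν v (a :: x) = nuL ν v a + nuW ν v x := by
    intro a x; simp [nuW]
  have hEq : ∀ w : List A,
      nuW ν v w * D w
        + ∑ i ∈ Finset.range (w.length + 1),
            (β (w.take i) * D (w.drop i) - D (w.take i) * β (w.drop i)) = 0 := by
    intro w
    have h1 : nuW ν v w * βbar w
        + ((∑ i ∈ Finset.range (w.length + 1), β (w.take i) * βbar (w.drop i))
          - ∑ i ∈ Finset.range (w.length + 1), βbar (w.take i) * β (w.drop i)) = 0 := by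
      simpa [xiOp, conv] using congrFun hi w
    have h2 : nuW ν v w * βbar' w
        + ((∑ i ∈ Finset.range (w.length + 1), β (w.take i) * βbar' (w.drop i))
          - ∑ i ∈ Finset.range (w.length + 1), βbar' (w.take i) * β (w.drop i)) = 0 := by
      simpa [xiOp, conv] using congrFun hi' w
    simp only [hDdef, mul_sub, sub_mul, Finset.sum_sub_distrib]
    linear_combination h1 - h2
  have hmain : ∀ n : ℕ, ∀ w : List A, w.length = n → D w = 0 := by
    intro n
    induction n using Nat.strong_induction_on with
    | _ n IH =>
      have stepA : ∀ w : List A, w.length = n → nuW ν v w * D w = 0 := by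
        intro w hw
        have h := hEq w
        have hz : ∑ i ∈ Finset.range (w.length + 1),
            (β (w.take i) * D (w.drop i) - D (w.take i) * β (w.drop i)) = 0 := by
          apply Finset.sum_eq_zero
          intro i hi
          simp only [Finset.mem_range] at hi
          rcases eq_or_ne i 0 with rfl | h0
          · simp [hβ.1, hD0]
          rcases eq_or_ne i n with hin | hn2
          · have hdr : w.drop i = [] := by
              rw [List.drop_eq_nil_iff]; omega
            have htk : w.take i = w := by
              rw [List.take_of_length_le]; omega
            rw [hdr, htk]
            simp [hβ.1, hD0]
          · have hd : D (w.drop i) = 0 :=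
              IH (w.length - i) (by omega) _ (by simp)
            have ht : D (w.take i) = 0 :=
              IH i (by omega) _ (by rw [List.length_take]; omega)
            rw [hd, ht]; ring
        rw [hz, add_zero] at h
        exact h
      match n, IH, stepA with
      | 0, IH, stepA =>
        intro w hw
        rw [List.length_eq_zero_iff] at hw
        subst hw; exact hD0
      | 1, IH, stepA =>
        intro w hw
        match w, hw with
        | [a], _ =>
          by_cases ha : nuL ν v a = 0
          · exact hDnull [a] (by simp) (by simpa using ha)
          · have h := stepA [a] rfl
            have hnu : nuW ν v [a] ≠ 0 := by simpa [nuW] using ha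
            exact (mul_eq_zero.mp h).resolve_left hnu
      | (n2+2), IH, stepA =>
        have hrel : ∀ (u' : List A) (a : A), (u' ++ [a]).length = n2 + 2 →
            nuW ν v (u' ++ [a]) = 0 →
            β [ℓ₀] * D (u' ++ [a]) = D (ℓ₀ :: u') * β [a] := by
          intro u' a hlen hnu
          have hu' : u'.length = n2 + 1 := by simpa using hlen
          have h := hEq (ℓ₀ :: (u' ++ [a]))
          have hL : (ℓ₀ :: (u' ++ [a])).length = n2 + 3 := by simp [hu']
          have hnuL : nuW ν v (ℓ₀ :: (u' ++ [a])) = 0 := by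
            rw [hnuCons, hℓ₀, hnu]; ring
          rw [hnuL, zero_mul, zero_add, hL] at h
          have hsub : ({1, n2 + 2} : Finset ℕ) ⊆ Finset.range (n2 + 3 + 1) := by
            intro i hi
            simp only [Finset.mem_insert, Finset.mem_singleton] at hi
            rcases hi with rfl | rfl <;> simp
          set L : List A := ℓ₀ :: (u' ++ [a]) with hLdef
          have hzero : ∀ i ∈ Finset.range (n2 + 3 + 1), i ∉ ({1, n2 + 2} : Finset ℕ) →
              (β (L.take i) * D (L.drop i) - D (L.take i) * β (L.drop i)) = 0 := by
            intro i hi hni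
            simp only [Finset.mem_range] at hi
            simp only [Finset.mem_insert, Finset.mem_singleton, not_or] at hni
            rcases eq_or_ne i 0 with rfl | h0
            · simp [hβ.1, hD0]
            rcases eq_or_ne i (n2 + 3) with rfl | hn3
            · have hdr : L.drop (n2 + 3) = [] := by
                rw [List.drop_eq_nil_iff, hLdef]; simp [hu']
              have htk : L.take (n2 + 3) = L := by
                rw [List.take_of_length_le]; rw [hLdef]; simp [hu']
              rw [hdr, htk]; simp [hβ.1, hD0]
            · have hd : D (L.drop i) = 0 :=
                IH (L.length - i) (by rw [hLdef]; simp [hu']; omega) _ (by simp)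
              have ht : D (L.take i) = 0 :=
                IH i (by omega) _ (by rw [List.length_take, hLdef]; simp [hu']; omega)
              rw [hd, ht]; ring
          have hsum : ∑ i ∈ Finset.range (n2 + 3 + 1),
              (β (L.take i) * D (L.drop i) - D (L.take i) * β (L.drop i))
              = ∑ i ∈ ({1, n2 + 2} : Finset ℕ),
              (β (L.take i) * D (L.drop i) - D (L.take i) * β (L.drop i)) :=
            (Finset.sum_subset hsub hzero).symm
          rw [hsum, Finset.sum_pair (by omega : (1:ℕ) ≠ n2 + 2)] at h
          have e1t : L.take 1 = [ℓ₀] := rfl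
          have e1d : L.drop 1 = u' ++ [a] := rfl
          have e2t : L.take (n2 + 2) = ℓ₀ :: u' := by
            rw [hLdef, List.take_succ_cons, List.take_left' hu']
          have e2d : L.drop (n2 + 2) = [a] := by
            rw [hLdef, List.drop_succ_cons, List.drop_left' hu']
          have hDl : D [ℓ₀] = 0 := hDnull [ℓ₀] (by simp) (by simpa using hℓ₀)
          have hDa : D [a] = 0 := IH 1 (by omega) [a] rfl
          rw [e1t, e1d, e2t, e2d, hDl, hDa] at h
          linear_combination h
        have inner : ∀ m : ℕ, ∀ s t : List A, (s ++ t).length = n2 + 2 →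
            nuW ν v (s ++ t) = 0 → (∀ ℓ ∈ s, nuL ν v ℓ = 0) → t.length = m →
            D (s ++ t) = 0 := by
          intro m
          induction m with
          | zero =>
            intro s t hlen hnu hs ht
            rw [List.length_eq_zero_iff] at ht
            subst ht
            refine hDnull _ (by intro hc; rw [hc] at hlen; simp at hlen) ?_
            intro ℓ hℓ
            exact hs ℓ (by simpa using hℓ)
          | succ m ih =>
            intro s t hlen hnu hs ht
            rcases t.eq_nil_or_concat with rfl | ⟨t', a, rfl⟩
            · simp at ht
            rw [List.concat_eq_append] at hlen hnu ht
            have ht' : t'.length = m := by simpa using ht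
            have hassoc : s ++ (t' ++ [a]) = (s ++ t') ++ [a] := by
              rw [List.append_assoc]
            rw [List.concat_eq_append, hassoc]
            rw [hassoc] at hlen hnu
            have hrel' := hrel (s ++ t') a hlen hnu
            have hlen2 : (ℓ₀ :: (s ++ t')).length = n2 + 2 := by
              simp only [List.length_append, List.length_cons, List.length_nil] at hlen ⊢
              omega
            have hnuS : nuW ν v [a] = nuL ν v a := by simp [nuW]
            have hnu3 : nuW ν v s + nuW ν v t' + nuL ν v a = 0 := by
              rw [hnuApp, hnuApp, hnuS] at hnu
              linear_combination hnu
            have hnu4 : nuW ν v (ℓ₀ :: (s ++ t')) = nuW ν v s + nuW ν v t' := by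
              rw [hnuCons, hnuApp, hℓ₀]; ring
            by_cases ha : nuL ν v a = 0
            · have hD2 : D (ℓ₀ :: (s ++ t')) = 0 := by
                have := ih (ℓ₀ :: s) t' ?_ ?_ ?_ ht'
                · simpa using this
                · simpa using hlen2
                · show nuW ν v ((ℓ₀ :: s) ++ t') = 0
                  rw [List.cons_append, hnu4]
                  rw [ha] at hnu3
                  linear_combination hnu3
                · intro ℓ hℓ
                  rcases List.mem_cons.mp hℓ with rfl | hℓ
                  · exact hℓ₀
                  · exact hs ℓ hℓ
              rw [hD2, zero_mul] at hrel'
              exact (mul_eq_zero.mp hrel').resolve_left hβ₀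
            · have hD2 : D (ℓ₀ :: (s ++ t')) = 0 := by
                have hnu2 : nuW ν v (ℓ₀ :: (s ++ t')) ≠ 0 := by
                  rw [hnu4]
                  intro hc
                  apply ha
                  linear_combination hnu3 - hc
                have := stepA (ℓ₀ :: (s ++ t')) hlen2
                exact (mul_eq_zero.mp this).resolve_left hnu2
              rw [hD2, zero_mul] at hrel'
              exact (mul_eq_zero.mp hrel').resolve_left hβ₀
        intro w hw
        by_cases hnu : nuW ν v w = 0
        · have := inner w.length [] w (by simpa using hw) (by simpa using hnu)
            (by simp) rfl
          simpa using this
        · exact ((mul_eq_zero.mp (stepA w hw)).resolve_left hnu)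
  funext w
  have h := hmain w.length w rfl
  have h2 : βbar w - βbar' w = 0 := h
  exact sub_eq_zero.mp h2
end

section
/- (Freedom in the normal form for group elements.) Let v ∈ ℂ^d and η ∈ G, let κ ∈ G, and set η̂ = κ★η★(Ξ_v(κ⁻¹)); assume Ξ_v η̂ = η̂. Let κ̃ ∈ G, set η̃ = κ̃★η★(Ξ_v(κ̃⁻¹)), and let δ = κ̃★κ⁻¹. Then Ξ_v η̃ = η̃ if and only if Ξ_v δ = δ, and in that case η̃ = δ★η̂★δ⁻¹. -/
open scoped BigOperators

section Helpers

variable {A : Type*} {d : ℕ}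

lemma unitCW_ne {w : List A} (h : w ≠ []) : unitCW w = 0 := by
  cases w with
  | nil => exact absurd rfl h
  | cons a l => rfl

lemma conv_assoc (x y z : List A → ℂ) :
    conv (conv x y) z = conv x (conv y z) := by
  funext w
  have L : conv (conv x y) z w =
      ∑ p ∈ (Finset.range (w.length + 1)).sigma (fun j => Finset.range (j + 1)),
        x (w.take p.2) * (y ((w.drop p.2).take (p.1 - p.2)) * z (w.drop p.1)) := by
    rw [Finset.sum_sigma]
    show ∑ j ∈ Finset.range (w.length + 1), conv x y (w.take j) * z (w.drop j) = _
    refine Finset.sum_congr rfl fun j hj => ?_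
    rw [Finset.mem_range] at hj
    rw [conv]
    rw [List.length_take, min_eq_left (by omega), Finset.sum_mul]
    refine Finset.sum_congr rfl fun i hi => ?_
    rw [Finset.mem_range] at hi
    rw [List.take_take, min_eq_left (by omega), List.drop_take]
    ring
  have R : conv x (conv y z) w =
      ∑ p ∈ (Finset.range (w.length + 1)).sigma (fun i => Finset.range (w.length - i + 1)),
        x (w.take p.1) * (y ((w.drop p.1).take p.2) * z (w.drop (p.1 + p.2))) := by
    rw [Finset.sum_sigma]
    show ∑ i ∈ Finset.range (w.length + 1), x (w.take i) * conv y z (w.drop i) = _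
    refine Finset.sum_congr rfl fun i hi => ?_
    rw [Finset.mem_range] at hi
    rw [conv, List.length_drop, Finset.mul_sum]
    refine Finset.sum_congr rfl fun k hk => ?_
    rw [List.drop_drop]
  rw [L, R]
  refine Finset.sum_bij' (fun p _ => ⟨p.2, p.1 - p.2⟩) (fun q _ => ⟨q.1 + q.2, q.1⟩)
    ?_ ?_ ?_ ?_ ?_
  · intro p hp
    simp only [Finset.mem_sigma, Finset.mem_range] at hp ⊢
    omega
  · intro q hq
    simp only [Finset.mem_sigma, Finset.mem_range] at hq ⊢
    omega
  · intro p hp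
    obtain ⟨pj, pi⟩ := p
    simp only [Finset.mem_sigma, Finset.mem_range] at hp
    have h : pi + (pj - pi) = pj := by omega
    simp [h]
  · intro q hq
    obtain ⟨qi, qk⟩ := q
    simp only [Finset.mem_sigma, Finset.mem_range] at hq
    have h : qi + qk - qi = qk := by omega
    simp [h]
  · intro p hp
    simp only [Finset.mem_sigma, Finset.mem_range] at hp
    have : p.2 + (p.1 - p.2) = p.1 := by omega
    rw [this]

lemma conv_unit (x : List A → ℂ) : conv x unitCW = x := by
  funext w
  rw [conv, Finset.sum_eq_single w.length]
  · rw [List.take_length, List.drop_length]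
    show x w * unitCW [] = x w
    simp [unitCW]
  · intro i hi hne
    rw [Finset.mem_range] at hi
    have h : w.drop i ≠ [] := by
      rw [ne_eq, List.drop_eq_nil_iff]
      omega
    rw [unitCW_ne h, mul_zero]
  · intro h
    exact absurd (Finset.self_mem_range_succ w.length) h

lemma unit_conv (x : List A → ℂ) : conv unitCW x = x := by
  funext w
  rw [conv, Finset.sum_eq_single 0]
  · rw [List.take_zero, List.drop_zero]
    show unitCW [] * x w = x w
    simp [unitCW]
  · intro i hi hne
    rw [Finset.mem_range] at hi
    have h : w.take i ≠ [] := by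
      rw [ne_eq, List.take_eq_nil_iff]
      push_neg
      constructor
      · exact hne
      · intro hw; subst hw; simp at hi; omega
    rw [unitCW_ne h, zero_mul]
  · intro h
    simp at h

lemma conv_cancel_left {a b : List A → ℂ} (h : conv a b = unitCW) (x : List A → ℂ) :
    conv a (conv b x) = x := by
  rw [← conv_assoc, h, unit_conv]

lemma conv_cancel_right {a b : List A → ℂ} (h : conv a b = unitCW) (x : List A → ℂ) :
    conv (conv x a) b = x := by
  rw [conv_assoc, h, conv_unit]

lemma convInv_unique {a b c : List A → ℂ} (h1 : conv a b = unitCW) (h2 : conv c a = unitCW) :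
    c = b :=
  calc c = conv c unitCW := (conv_unit c).symm
    _ = conv c (conv a b) := by rw [h1]
    _ = conv (conv c a) b := (conv_assoc c a b).symm
    _ = conv unitCW b := by rw [h2]
    _ = b := unit_conv b

lemma nuW_nil (ν : Fin d → A → ℂ) (v : Fin d → ℂ) : nuW ν v [] = 0 := rfl

lemma nuW_append (ν : Fin d → A → ℂ) (v : Fin d → ℂ) (u u' : List A) :
    nuW ν v (u ++ u') = nuW ν v u + nuW ν v u' := by
  simp [nuW]

lemma XiOp_conv (ν : Fin d → A → ℂ) (v : Fin d → ℂ) (x y : List A → ℂ) :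
    XiOp ν v (conv x y) = conv (XiOp ν v x) (XiOp ν v y) := by
  funext w
  simp only [XiOp, conv, Finset.mul_sum]
  refine Finset.sum_congr rfl fun i hi => ?_
  have h : nuW ν v w = nuW ν v (w.take i) + nuW ν v (w.drop i) := by
    conv_lhs => rw [← List.take_append_drop i w]
    exact nuW_append ν v _ _
  rw [h, Complex.exp_add]
  ring

lemma XiOp_unit (ν : Fin d → A → ℂ) (v : Fin d → ℂ) :
    XiOp ν v (unitCW : List A → ℂ) = unitCW := by
  funext w
  cases w with
  | nil =>
    show Complex.exp (nuW ν v []) * unitCW [] = unitCW ([] : List A)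
    simp [unitCW, nuW]
  | cons a l =>
    show Complex.exp _ * unitCW (a :: l) = unitCW (a :: l)
    rw [unitCW_ne (by simp : (a :: l : List A) ≠ []), mul_zero]

lemma conv_nil (x y : List A → ℂ) : conv x y ([] : List A) = x [] * y [] := by
  simp [conv]

lemma conv_apply_right_small (x y : List A → ℂ) (w : List A) (hw : w ≠ [])
    (hy : ∀ u : List A, u ≠ [] → u.length < w.length → y u = 0) :
    conv x y w = x [] * y w + x w * y [] := by
  have hn : 1 ≤ w.length := List.length_pos_iff.mpr hw
  rw [conv, Finset.range_eq_Ico, Finset.sum_Ico_succ_top (Nat.zero_le _),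
    Finset.sum_eq_sum_Ico_succ_bot (by omega : (0:ℕ) < w.length)]
  have hmid : ∑ i ∈ Finset.Ico 1 w.length, x (w.take i) * y (w.drop i) = 0 := by
    apply Finset.sum_eq_zero
    intro i hi
    rw [Finset.mem_Ico] at hi
    have h1 : w.drop i ≠ [] := by rw [ne_eq, List.drop_eq_nil_iff]; omega
    have h2 : (w.drop i).length < w.length := by rw [List.length_drop]; omega
    rw [hy _ h1 h2, mul_zero]
  rw [hmid, add_zero, List.take_zero, List.drop_zero, List.take_length, List.drop_length]

lemma conv_apply_left_small (x y : List A → ℂ) (w : List A) (hw : w ≠ [])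
    (hx : ∀ u : List A, u ≠ [] → u.length < w.length → x u = 0) :
    conv x y w = x [] * y w + x w * y [] := by
  have hn : 1 ≤ w.length := List.length_pos_iff.mpr hw
  rw [conv, Finset.range_eq_Ico, Finset.sum_Ico_succ_top (Nat.zero_le _),
    Finset.sum_eq_sum_Ico_succ_bot (by omega : (0:ℕ) < w.length)]
  have hmid : ∑ i ∈ Finset.Ico 1 w.length, x (w.take i) * y (w.drop i) = 0 := by
    apply Finset.sum_eq_zero
    intro i hi
    rw [Finset.mem_Ico] at hi
    have h1 : w.take i ≠ [] := by
      rw [ne_eq, List.take_eq_nil_iff]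
      push_neg
      exact ⟨by omega, hw⟩
    have h2 : (w.take i).length < w.length := by
      rw [List.length_take]; omega
    rw [hx _ h1 h2, zero_mul]
  rw [hmid, add_zero, List.take_zero, List.drop_zero, List.take_length, List.drop_length]

end Helpers

/-- freedom in the normal form for group elements. With
`η̂ = κ★η★(Ξ_v(κ⁻¹))` satisfying `Ξ_v η̂ = η̂`, and `η̃ = κ̃★η★(Ξ_v(κ̃⁻¹))`,
`δ = κ̃★κ⁻¹`, one has `Ξ_v η̃ = η̃` iff `Ξ_v δ = δ`, and in that case
`η̃ = δ★η̂★δ⁻¹`. -/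
theorem stmt19 {A : Type*} [Countable A] {d : ℕ} (hd : 1 ≤ d) (ν : Fin d → A → ℂ)
    (v : Fin d → ℂ) (η : List A → ℂ) (hη : isGrp η)
    (κ κinv κt κtinv δ δinv ηhat ηtil : List A → ℂ)
    (hκ : isGrp κ) (hκt : isGrp κt)
    (hκinv₁ : conv κ κinv = unitCW) (hκinv₂ : conv κinv κ = unitCW)
    (hκtinv₁ : conv κt κtinv = unitCW) (hκtinv₂ : conv κtinv κt = unitCW)
    (hηhat : ηhat = conv (conv κ η) (XiOp ν v κinv))
    (hnorm : XiOp ν v ηhat = ηhat)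
    (hηtil : ηtil = conv (conv κt η) (XiOp ν v κtinv))
    (hδ : δ = conv κt κinv)
    (hδinv₁ : conv δ δinv = unitCW) (hδinv₂ : conv δinv δ = unitCW) :
    (XiOp ν v ηtil = ηtil ↔ XiOp ν v δ = δ) ∧
    (XiOp ν v ηtil = ηtil → ηtil = conv (conv δ ηhat) δinv) := by
  -- basic values at the empty word
  have hκ0 : κ [] = 1 := hκ.1
  have hκt0 : κt [] = 1 := hκt.1
  have hκinv0 : κinv [] = 1 := by
    have h := congrFun hκinv₁ []
    rw [conv_nil, hκ0, one_mul] at h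
    exact h
  have hδ0 : δ [] = 1 := by
    rw [hδ, conv_nil, hκt0, one_mul, hκinv0]
  have hδinv0 : δinv [] = 1 := by
    have h := congrFun hδinv₂ []
    rw [conv_nil, hδ0, mul_one] at h
    exact h
  have hηhat0 : ηhat [] = 1 := by
    rw [hηhat, conv_nil, conv_nil, hκ0, hη.1]
    show 1 * 1 * (Complex.exp (nuW ν v []) * κinv []) = 1
    rw [nuW_nil, Complex.exp_zero, hκinv0]
    ring
  -- the inverse of δ in terms of κ, κtinv
  have hδinv_eq : δinv = conv κ κtinv := by
    refine convInv_unique (a := δ) ?_ hδinv₂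
    rw [hδ, conv_assoc, conv_cancel_left hκinv₂, hκtinv₁]
  -- auxiliary cancellation for Ξ-images
  have hΞκinvκ : conv (XiOp ν v κinv) (XiOp ν v κ) = unitCW := by
    rw [← XiOp_conv, hκinv₂, XiOp_unit]
  -- key identity: ηtil = δ ★ ηhat ★ Ξ(δinv)
  have key : ηtil = conv (conv δ ηhat) (XiOp ν v δinv) := by
    rw [hηtil, hηhat, hδ, hδinv_eq, XiOp_conv]
    simp only [conv_assoc]
    rw [conv_cancel_left hκinv₂, conv_cancel_left hΞκinvκ]
  -- Ξ ηtil in the same form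
  have hΞηtil : XiOp ν v ηtil =
      conv (conv (XiOp ν v δ) ηhat) (XiOp ν v (XiOp ν v δinv)) := by
    rw [key, XiOp_conv, XiOp_conv, hnorm]
  -- δ ★ α = Ξ δ where α = δinv ★ Ξδ
  have hδα : conv δ (conv δinv (XiOp ν v δ)) = XiOp ν v δ :=
    conv_cancel_left hδinv₁ _
  have hα0 : conv δinv (XiOp ν v δ) [] = 1 := by
    rw [conv_nil, hδinv0, one_mul]
    show Complex.exp (nuW ν v []) * δ [] = 1
    rw [nuW_nil, Complex.exp_zero, hδ0, mul_one]
  -- forward direction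
  have fwd : XiOp ν v ηtil = ηtil → XiOp ν v δ = δ := by
    intro hξ
    have E : conv (conv δ ηhat) (XiOp ν v δinv) =
        conv (conv (XiOp ν v δ) ηhat) (XiOp ν v (XiOp ν v δinv)) := by
      rw [← key, ← hΞηtil]
      exact hξ.symm
    have hΞΞcancel : conv (XiOp ν v (XiOp ν v δinv)) (XiOp ν v (XiOp ν v δ)) = unitCW := by
      rw [← XiOp_conv, ← XiOp_conv, hδinv₂, XiOp_unit, XiOp_unit]
    have E' : conv ηhat (XiOp ν v (conv δinv (XiOp ν v δ))) =
        conv (conv δinv (XiOp ν v δ)) ηhat := by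
      have h1 := congrArg
        (fun t => conv δinv (conv t (XiOp ν v (XiOp ν v δ)))) E
      simp only [conv_assoc] at h1
      rw [conv_cancel_left hδinv₂, hΞΞcancel, conv_unit] at h1
      rw [XiOp_conv, conv_assoc]
      exact h1
    -- α is the unit, by strong induction on word length
    have hαunit : ∀ w : List A, conv δinv (XiOp ν v δ) w = unitCW w := by
      have main : ∀ n : ℕ, ∀ w : List A, w.length = n →
          conv δinv (XiOp ν v δ) w = unitCW w := by
        intro n
        induction n using Nat.strong_induction_on with
        | _ n IH =>
          intro w hw
          cases w with
          | nil => exact hα0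
          | cons a l =>
            have hwne : (a :: l : List A) ≠ [] := by simp
            have hsmall : ∀ u : List A, u ≠ [] → u.length < (a :: l).length →
                conv δinv (XiOp ν v δ) u = 0 := by
              intro u hu hlen
              have := IH u.length (by omega) u rfl
              rw [this, unitCW_ne hu]
            have hsmallΞ : ∀ u : List A, u ≠ [] → u.length < (a :: l).length →
                XiOp ν v (conv δinv (XiOp ν v δ)) u = 0 := by
              intro u hu hlen
              show Complex.exp _ * conv δinv (XiOp ν v δ) u = 0
              rw [hsmall u hu hlen, mul_zero]
            have e1 := congrFun E' (a :: l)
            rw [conv_apply_right_small _ _ _ hwne hsmallΞ,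
              conv_apply_left_small _ _ _ hwne hsmall] at e1
            have e2 := congrFun hδα (a :: l)
            rw [conv_apply_right_small _ _ _ hwne hsmall] at e2
            -- clean up
            have hΞα0 : XiOp ν v (conv δinv (XiOp ν v δ)) [] = 1 := by
              show Complex.exp (nuW ν v []) * conv δinv (XiOp ν v δ) [] = 1
              rw [nuW_nil, Complex.exp_zero, hα0, mul_one]
            have hΞαw : XiOp ν v (conv δinv (XiOp ν v δ)) (a :: l) =
                Complex.exp (nuW ν v (a :: l)) * conv δinv (XiOp ν v δ) (a :: l) := rfl
            rw [hΞα0, hΞαw, hηhat0, hα0, mul_one, one_mul, one_mul, mul_one] at e1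
            have hΞδw : XiOp ν v δ (a :: l) =
                Complex.exp (nuW ν v (a :: l)) * δ (a :: l) := rfl
            rw [hΞδw, hδ0, hα0, one_mul, mul_one] at e2
            set c := Complex.exp (nuW ν v (a :: l)) with hc
            set xx := conv δinv (XiOp ν v δ) (a :: l) with hxx
            set dd := δ (a :: l) with hdd
            -- e1 : c * xx + ηhat (a::l) = ηhat (a::l) + xx
            -- e2 : xx + dd = c * dd
            have h3 : (c - 1) * xx = 0 := by linear_combination e1
            have h4 : xx = (c - 1) * dd := by linear_combination e2
            have h5 : (c - 1) * ((c - 1) * dd) = 0 := by rw [← h4]; exact h3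
            have h6 : xx = 0 := by
              rcases mul_eq_zero.mp h5 with h | h
              · rw [h4, h, zero_mul]
              · rw [h4, h]
            rw [unitCW_ne hwne]
            exact h6
      intro w
      exact main w.length w rfl
    have hαu : conv δinv (XiOp ν v δ) = unitCW := funext hαunit
    rw [← hδα, hαu, conv_unit]
  -- from Ξδ = δ deduce Ξδinv = δinv
  have hinv : XiOp ν v δ = δ → XiOp ν v δinv = δinv := by
    intro hΞδ
    have h2' : conv (XiOp ν v δinv) δ = unitCW := by
      calc conv (XiOp ν v δinv) δ = conv (XiOp ν v δinv) (XiOp ν v δ) := by rw [hΞδ]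
        _ = XiOp ν v (conv δinv δ) := (XiOp_conv ν v δinv δ).symm
        _ = unitCW := by rw [hδinv₂, XiOp_unit]
    exact convInv_unique hδinv₁ h2'
  have bwd : XiOp ν v δ = δ → XiOp ν v ηtil = ηtil := by
    intro hΞδ
    have hΞδinv := hinv hΞδ
    rw [hΞηtil, key, hΞδ, hΞδinv, hΞδinv]
  refine ⟨⟨fwd, bwd⟩, ?_⟩
  intro hξ
  have hΞδ := fwd hξ
  have hΞδinv := hinv hΞδ
  rw [key, hΞδinv]
end
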